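/- Let S be a Cu-semigroup and n ∈ ℕ. Then dim(S) ≤ n if and only if every finite subset of S is contained in a sub-Cu-semigroup T ⊆ S with dim(T) ≤ n, which in turn holds if and only if every countable subset of S is contained in a countably based sub-Cu-semigroup T ⊆ S with dim(T) ≤ n. -/

import Mathlib

def WayBelow {S : Type*} [PartialOrder S] (x y : S) : Prop :=
  ∀ f : ℕ → S, Monotone f → ∀ z : S, IsLUB (Set.range f) z → y ≤ z → ∃ n, x ≤ f n

class CuSemigroup (S : Type*) [AddCommMonoid S] [PartialOrder S] : Prop where
  zero_le : ∀ x : S, 0 ≤ x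
  add_le_add_left : ∀ x y : S, x ≤ y → ∀ z : S, z + x ≤ z + y
  exists_sup : ∀ f : ℕ → S, Monotone f → ∃ z : S, IsLUB (Set.range f) z
  exists_wb_seq : ∀ x : S, ∃ f : ℕ → S, (∀ n, WayBelow (f n) (f (n + 1))) ∧ IsLUB (Set.range f) x
  wb_add : ∀ x' x y' y : S, WayBelow x' x → WayBelow y' y → WayBelow (x' + y') (x + y)
  sup_add : ∀ f g : ℕ → S, Monotone f → Monotone g → ∀ a b : S,
    IsLUB (Set.range f) a → IsLUB (Set.range g) b →
    IsLUB (Set.range fun n => f n + g n) (a + b)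

def cuDerivedSet {S : Type*} [PartialOrder S] (T : Set S) : Set S :=
  { s | ∃ f : ℕ → S, (∀ n, f n ∈ T) ∧ (∀ n, WayBelow (f n) (f (n + 1))) ∧ IsLUB (Set.range f) s }

def SupClosedSet {S : Type*} [PartialOrder S] (T : Set S) : Prop :=
  ∀ f : ℕ → S, Monotone f → (∀ n, f n ∈ T) → ∀ z : S, IsLUB (Set.range f) z → z ∈ T

def IsSubCu {S : Type*} [AddCommMonoid S] [PartialOrder S] (T : AddSubmonoid S) : Prop :=
  CuSemigroup T ∧
  (∀ f : ℕ → T, Monotone f → ∀ z : T, IsLUB (Set.range f) z →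
    IsLUB (Set.range fun n => (f n : S)) (z : S)) ∧
  (∀ x y : T, WayBelow x y → WayBelow (x : S) (y : S))

def CountablyBased (S : Type*) [PartialOrder S] : Prop :=
  ∃ B : Set S, B.Countable ∧ ∀ x' x : S, WayBelow x' x → ∃ b ∈ B, WayBelow x' b ∧ WayBelow b x

def DimLE (S : Type*) [AddCommMonoid S] [PartialOrder S] (n : ℕ) : Prop :=
  ∀ (x' x : S) (r : ℕ) (y : Fin r → S),
    WayBelow x' x → WayBelow x (∑ j, y j) →
    ∃ z : Fin r → Fin (n + 1) → S,
      (∀ j k, WayBelow (z j k) (y j)) ∧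
      WayBelow x' (∑ j, ∑ k, z j k) ∧
      ∀ k, WayBelow (∑ j, z j k) x

noncomputable def CuDim (S : Type*) [AddCommMonoid S] [PartialOrder S] : ℕ∞ :=
  sInf {n : ℕ∞ | ∃ m : ℕ, n = (m : ℕ∞) ∧ DimLE S m}

namespace CuProof

variable {S : Type*} [AddCommMonoid S] [PartialOrder S]

lemma isLUB_const (y : S) : IsLUB (Set.range fun _ : ℕ => y) y := by
  rw [Set.range_const]; exact isLUB_singleton

lemma wb_le {x y : S} (h : WayBelow x y) : x ≤ y := by
  obtain ⟨n, hn⟩ := h (fun _ => y) monotone_const y (isLUB_const y) le_rfl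
  exact hn

lemma le_wb {x x' y : S} (hxx : x ≤ x') (h : WayBelow x' y) : WayBelow x y :=
  fun f hf z hz hyz => (h f hf z hz hyz).imp fun n hn => hxx.trans hn

lemma wb_le_right {x y y' : S} (h : WayBelow x y) (hyy : y ≤ y') : WayBelow x y' :=
  fun f hf z hz hyz => h f hf z hz (hyy.trans hyz)

lemma monotone_of_wb {f : ℕ → S} (h : ∀ n, WayBelow (f n) (f (n + 1))) : Monotone f :=
  monotone_nat_of_le_succ fun n => wb_le (h n)

def cuOrdered (S : Type*) [AddCommMonoid S] [PartialOrder S] [CuSemigroup S] :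
    IsOrderedAddMonoid S :=
  { add_le_add_left := fun a b h c => by
      rw [add_comm a c, add_comm b c]; exact CuSemigroup.add_le_add_left a b h c
    add_le_add_right := fun a b h c => CuSemigroup.add_le_add_left a b h c }

variable [CuSemigroup S]

lemma isLUB_finsetSum {ι : Type*} (s : Finset ι) (f : ι → ℕ → S) (a : ι → S)
    (hm : ∀ i, Monotone (f i)) (h : ∀ i, IsLUB (Set.range (f i)) (a i)) :
    IsLUB (Set.range fun m => ∑ i ∈ s, f i m) (∑ i ∈ s, a i) := by
  classical
  induction s using Finset.induction_on with
  | empty => simpa using isLUB_const (0 : S)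
  | insert b t hx ih =>
    have hmt : Monotone fun m => ∑ i ∈ t, f i m := by
      letI := cuOrdered S
      intro p q hpq
      exact Finset.sum_le_sum fun i _ => hm i hpq
    have := CuSemigroup.sup_add (f b) (fun m => ∑ i ∈ t, f i m) (hm b) hmt (a b)
      (∑ i ∈ t, a i) (h b) ih
    simpa [Finset.sum_insert hx] using this

lemma supClosed_cuDerivedSet (B : Set S) : SupClosedSet (cuDerivedSet B) := by
  intro t ht hmem z hz
  choose b hbB hbwb hblub using hmem
  have hble : ∀ m k, b m k ≤ t m := fun m k => (hblub m).1 ⟨k, rfl⟩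
  have hbwbt : ∀ m k, WayBelow (b m k) (t m) := fun m k =>
    wb_le_right (hbwb m k) (hble m (k + 1))
  have hbmono : ∀ m, Monotone (b m) := fun m => monotone_of_wb (hbwb m)
  have key : ∀ c : S, ∀ m p q : ℕ, WayBelow c (t m) →
      ∃ m' k', WayBelow c (b m' k') ∧ b p q ≤ b m' k' ∧ WayBelow (b m' k') (t m') := by
    intro c m p q hc
    set M := max m p with hM
    have h1 : WayBelow c (t M) := wb_le_right hc (ht (le_max_left m p))
    obtain ⟨K1, hK1⟩ := h1 (b M) (hbmono M) (t M) (hblub M) le_rfl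
    have h2 : WayBelow (b p q) (t M) := wb_le_right (hbwbt p q) (ht (le_max_right m p))
    obtain ⟨K2, hK2⟩ := h2 (b M) (hbmono M) (t M) (hblub M) le_rfl
    refine ⟨M, max K1 K2 + 1, ?_, ?_, hbwbt M _⟩
    · exact le_wb (hK1.trans (hbmono M (le_max_left K1 K2))) (hbwb M _)
    · exact hK2.trans (hbmono M ((le_max_right K1 K2).trans (Nat.le_succ _)))
  set P : S → Prop := fun x => x ∈ B ∧ ∃ m, WayBelow x (t m) with hP
  have step : ∀ (l : ℕ) (x : S), P x → ∃ y : S,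
      (P y ∧ WayBelow x y) ∧ b (Nat.unpair l).1 (Nat.unpair l).2 ≤ y := by
    rintro l x ⟨hxB, m, hxm⟩
    obtain ⟨m', k', h1, h2, h3⟩ := key x m (Nat.unpair l).1 (Nat.unpair l).2 hxm
    exact ⟨b m' k', ⟨⟨hbB m' k', m', h3⟩, h1⟩, h2⟩
  let c : ℕ → {x : S // P x} := fun l => Nat.rec ⟨b 0 0, hbB 0 0, 0, hbwbt 0 0⟩
    (fun l prev => ⟨(step l prev.1 prev.2).choose,
      (step l prev.1 prev.2).choose_spec.1.1⟩) l
  have hcdef : ∀ l, (c (l + 1)).1 = (step l (c l).1 (c l).2).choose := fun l => rfl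
  have hc1 : ∀ l, WayBelow (c l).1 (c (l + 1)).1 := by
    intro l; rw [hcdef l]; exact (step l (c l).1 (c l).2).choose_spec.1.2
  have hc2 : ∀ l, b (Nat.unpair l).1 (Nat.unpair l).2 ≤ (c (l + 1)).1 := by
    intro l
    rw [hcdef]
    exact (step l (c l).1 (c l).2).choose_spec.2
  refine ⟨fun l => (c l).1, fun l => (c l).2.1, hc1, ?_, ?_⟩
  · rintro _ ⟨l, rfl⟩
    obtain ⟨m, hm⟩ := (c l).2.2
    exact (wb_le hm).trans (hz.1 ⟨m, rfl⟩)
  · intro u hu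
    refine hz.2 ?_
    rintro _ ⟨m, rfl⟩
    refine (hblub m).2 ?_
    rintro _ ⟨k, rfl⟩
    have h := hc2 (Nat.pair m k)
    rw [Nat.unpair_pair] at h
    exact h.trans (hu ⟨Nat.pair m k + 1, rfl⟩)
section Subtype

variable (T : AddSubmonoid S)

lemma lub_subtype_of_lub (f : ℕ → T) (z : T)
    (h : IsLUB (Set.range fun n => (f n : S)) (z : S)) : IsLUB (Set.range f) z := by
  constructor
  · rintro _ ⟨k, rfl⟩
    exact Subtype.coe_le_coe.1 (h.1 ⟨k, rfl⟩)
  · intro u hu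
    refine Subtype.coe_le_coe.1 (h.2 ?_)
    rintro _ ⟨k, rfl⟩
    exact Subtype.coe_le_coe.2 (hu ⟨k, rfl⟩)

lemma lub_of_lub_subtype (hcl : SupClosedSet (T : Set S)) (f : ℕ → T) (hm : Monotone f)
    (z : T) (h : IsLUB (Set.range f) z) :
    IsLUB (Set.range fun n => (f n : S)) (z : S) := by
  have hm' : Monotone fun n => (f n : S) := fun a b hab => Subtype.coe_le_coe.2 (hm hab)
  obtain ⟨w, hw⟩ := CuSemigroup.exists_sup _ hm'
  have hwT : w ∈ T := hcl _ hm' (fun n => (f n).2) w hw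
  have h1 : (z : S) ≤ w := by
    have : z ≤ ⟨w, hwT⟩ := h.2 (by rintro _ ⟨k, rfl⟩; exact Subtype.coe_le_coe.1 (hw.1 ⟨k, rfl⟩))
    exact this
  have h2 : w ≤ (z : S) := hw.2 (by rintro _ ⟨k, rfl⟩; exact Subtype.coe_le_coe.2 (h.1 ⟨k, rfl⟩))
  exact (le_antisymm h2 h1) ▸ hw

lemma wb_subtype_of_wb (hcl : SupClosedSet (T : Set S)) (x y : T)
    (h : WayBelow (x : S) (y : S)) : WayBelow x y := by
  intro f hf z hz hyz
  obtain ⟨k, hk⟩ := h _ (fun a b hab => Subtype.coe_le_coe.2 (hf hab)) (z : S)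
    (lub_of_lub_subtype T hcl f hf z hz) (Subtype.coe_le_coe.2 hyz)
  exact ⟨k, Subtype.coe_le_coe.1 hk⟩

lemma wb_subtype_of_wb' (h2 : ∀ f : ℕ → T, Monotone f → ∀ z : T, IsLUB (Set.range f) z →
    IsLUB (Set.range fun n => (f n : S)) (z : S)) (x y : T)
    (h : WayBelow (x : S) (y : S)) : WayBelow x y := by
  intro f hf z hz hyz
  obtain ⟨k, hk⟩ := h _ (fun a b hab => Subtype.coe_le_coe.2 (hf hab)) (z : S)
    (h2 f hf z hz) (Subtype.coe_le_coe.2 hyz)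
  exact ⟨k, Subtype.coe_le_coe.1 hk⟩

lemma coe_sum {r : ℕ} (y : Fin r → T) : ((∑ j, y j : T) : S) = ∑ j, (y j : S) :=
  map_sum T.subtype y Finset.univ

end Subtype
lemma wb_zero_zero : WayBelow (0 : S) (0 : S) :=
  fun f _ _ _ _ => ⟨0, CuSemigroup.zero_le _⟩

def derivedSubmonoid (B : Set S) (hB0 : (0 : S) ∈ B)
    (hBadd : ∀ x ∈ B, ∀ y ∈ B, x + y ∈ B) : AddSubmonoid S where
  carrier := cuDerivedSet B
  zero_mem' := ⟨fun _ => 0, fun _ => hB0, fun _ => wb_zero_zero, isLUB_const 0⟩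
  add_mem' := by
    rintro a b ⟨f, hfB, hfwb, hflub⟩ ⟨g, hgB, hgwb, hglub⟩
    exact ⟨fun k => f k + g k, fun k => hBadd _ (hfB k) _ (hgB k),
      fun k => CuSemigroup.wb_add _ _ _ _ (hfwb k) (hgwb k),
      CuSemigroup.sup_add f g (monotone_of_wb hfwb) (monotone_of_wb hgwb) a b hflub hglub⟩

lemma basis_step {B : Set S} {u v : S} (hv : v ∈ cuDerivedSet B) (huv : WayBelow u v) :
    ∃ b ∈ B, WayBelow u b ∧ WayBelow b v := by
  obtain ⟨f, hfB, hfwb, hflub⟩ := hv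
  obtain ⟨k, hk⟩ := huv f (monotone_of_wb hfwb) v hflub le_rfl
  exact ⟨f (k + 1), hfB (k + 1), le_wb hk (hfwb k),
    wb_le_right (hfwb (k + 1)) (hflub.1 ⟨k + 2, rfl⟩)⟩

theorem key_construction (n : ℕ) (B : Set S) (hB0 : (0 : S) ∈ B)
    (hBadd : ∀ x ∈ B, ∀ y ∈ B, x + y ∈ B)
    (hBapprox : ∀ x ∈ B, ∃ f : ℕ → S, (∀ k, f k ∈ B) ∧ (∀ k, WayBelow (f k) (f (k + 1))) ∧
      IsLUB (Set.range f) x)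
    (hBcount : B.Countable)
    (hBdim : ∀ x' x : S, x' ∈ B → x ∈ B → ∀ (r : ℕ) (y : Fin r → S), (∀ j, y j ∈ B) →
      WayBelow x' x → WayBelow x (∑ j, y j) →
      ∃ z : Fin r → Fin (n + 1) → S, (∀ j k, z j k ∈ B) ∧
        (∀ j k, WayBelow (z j k) (y j)) ∧
        WayBelow x' (∑ j, ∑ k, z j k) ∧ ∀ k, WayBelow (∑ j, z j k) x)
    (C : Set S) (hCB : C ⊆ B) :
    ∃ T : AddSubmonoid S, IsSubCu T ∧ C ⊆ (T : Set S) ∧ CountablyBased ↥T ∧ DimLE ↥T n := by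
  set T := derivedSubmonoid B hB0 hBadd with hT
  have hcar : ∀ x : S, x ∈ T ↔ x ∈ cuDerivedSet B := fun x => Iff.rfl
  have hcl : SupClosedSet (T : Set S) := supClosed_cuDerivedSet B
  have hBT : ∀ x ∈ B, x ∈ T := by
    intro x hx
    obtain ⟨f, h1, h2, h3⟩ := hBapprox x hx
    exact ⟨f, h1, h2, h3⟩
  have hCT : C ⊆ (T : Set S) := fun x hx => hBT x (hCB hx)
  -- lub transfer
  have lubTS : ∀ f : ℕ → T, Monotone f → ∀ z : T, IsLUB (Set.range f) z →
      IsLUB (Set.range fun n => (f n : S)) (z : S) := fun f hf z hz =>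
    lub_of_lub_subtype T hcl f hf z hz
  -- way-below transfer
  have wbST : ∀ x y : ↥T, WayBelow (x : S) (y : S) → WayBelow x y :=
    wb_subtype_of_wb T hcl
  have wbTS : ∀ x y : ↥T, WayBelow x y → WayBelow (x : S) (y : S) := by
    intro x y h
    obtain ⟨f, hfB, hfwb, hflub⟩ := y.2
    set g : ℕ → T := fun k => ⟨f k, hBT _ (hfB k)⟩ with hg
    have hgm : Monotone g := fun a b hab => Subtype.coe_le_coe.1 (monotone_of_wb hfwb hab)
    have hglub : IsLUB (Set.range g) y := lub_subtype_of_lub T g y hflub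
    obtain ⟨k, hk⟩ := h g hgm y hglub le_rfl
    have hk' : (x : S) ≤ f k := hk
    exact wb_le_right (le_wb hk' (hfwb k)) (hflub.1 ⟨k + 1, rfl⟩)
  -- CuSemigroup structure on T
  have hCu : CuSemigroup ↥T := by
    refine ⟨?_, ?_, ?_, ?_, ?_, ?_⟩
    · intro x
      exact Subtype.coe_le_coe.1 (CuSemigroup.zero_le (x : S))
    · intro x y hxy z
      have : (z : S) + (x : S) ≤ (z : S) + (y : S) :=
        CuSemigroup.add_le_add_left (x : S) (y : S) hxy (z : S)
      exact this
    · intro f hf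
      have hm' : Monotone fun n => (f n : S) := fun a b hab => Subtype.coe_le_coe.1 (hf hab)
      obtain ⟨w, hw⟩ := CuSemigroup.exists_sup _ hm'
      have hwT : w ∈ T := hcl _ hm' (fun n => (f n).2) w hw
      exact ⟨⟨w, hwT⟩, lub_subtype_of_lub T f ⟨w, hwT⟩ hw⟩
    · intro x
      obtain ⟨f, hfB, hfwb, hflub⟩ := x.2
      refine ⟨fun k => ⟨f k, hBT _ (hfB k)⟩, fun k => wbST _ _ (hfwb k),
        lub_subtype_of_lub T _ x hflub⟩
    · intro x' x y' y h1 h2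
      have := CuSemigroup.wb_add _ _ _ _ (wbTS _ _ h1) (wbTS _ _ h2)
      exact wbST (x' + y') (x + y) this
    · intro f g hf hg a b ha hb
      have := CuSemigroup.sup_add _ _ (fun p q hpq => Subtype.coe_le_coe.1 (hf hpq))
        (fun p q hpq => Subtype.coe_le_coe.1 (hg hpq)) (a : S) (b : S)
        (lubTS f hf a ha) (lubTS g hg b hb)
      exact lub_subtype_of_lub T (fun n => f n + g n) (a + b) this
  -- countably based
  have hCB' : CountablyBased ↥T := by
    refine ⟨Subtype.val ⁻¹' B, hBcount.preimage Subtype.coe_injective, ?_⟩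
    intro x' x h
    obtain ⟨b, hbB, h1, h2⟩ := basis_step x.2 (wbTS _ _ h)
    exact ⟨⟨b, hBT _ hbB⟩, hbB, wbST _ _ h1, wbST _ _ h2⟩
  -- dimension
  have hdimT : DimLE ↥T n := by
    intro x' x r y hx'x hxy
    have h1 : WayBelow (x' : S) (x : S) := wbTS _ _ hx'x
    have h2 : WayBelow (x : S) (∑ j, (y j : S)) := by
      have := wbTS _ _ hxy
      rwa [coe_sum] at this
    obtain ⟨b, hbB, hx'b, hbx⟩ := basis_step x.2 h1
    obtain ⟨b', hb'B, hx'b', hb'b⟩ := basis_step (hBT b hbB) hx'b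
    choose c hcB hcwb hclub using fun j => (y j).2
    have hcmono : ∀ j, Monotone (c j) := fun j => monotone_of_wb (hcwb j)
    have hsum : IsLUB (Set.range fun m => ∑ j, c j m) (∑ j, ((y j : S))) :=
      isLUB_finsetSum Finset.univ c _ hcmono hclub
    have hmono : Monotone fun m => ∑ j, c j m := by
      letI := cuOrdered S
      intro p q hpq
      exact Finset.sum_le_sum fun j _ => hcmono j hpq
    obtain ⟨K, hK⟩ := h2 _ hmono _ hsum le_rfl
    have hb_sum : WayBelow b (∑ j, c j K) := wb_le_right hbx hK
    obtain ⟨z, hzB, hzwb, hz1, hz2⟩ := hBdim b' b hb'B hbB r (fun j => c j K)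
      (fun j => hcB j K) hb'b hb_sum
    refine ⟨fun j k => ⟨z j k, hBT _ (hzB j k)⟩, ?_, ?_, ?_⟩
    · intro j k
      exact wbST _ _ (wb_le_right (hzwb j k) ((hclub j).1 ⟨K, rfl⟩))
    · refine wbST _ _ ?_
      have hco : ((∑ j, ∑ k, (⟨z j k, hBT _ (hzB j k)⟩ : T) : T) : S) = ∑ j, ∑ k, z j k := by
        rw [coe_sum]
        exact Finset.sum_congr rfl fun j _ => coe_sum _ _
      rw [hco]
      exact le_wb (wb_le hx'b') hz1
    · intro k
      refine wbST _ _ ?_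
      have hco : ((∑ j, (⟨z j k, hBT _ (hzB j k)⟩ : T) : T) : S) = ∑ j, z j k :=
        coe_sum _ _
      rw [hco]
      exact wb_le_right (hz2 k) (wb_le hbx)
  exact ⟨T, ⟨hCu, lubTS, wbTS⟩, hCT, hCB', hdimT⟩
theorem exists_good_B (n : ℕ) (hdim : DimLE S n) (C : Set S) (hC : C.Countable) :
    ∃ B : Set S, B.Countable ∧ C ⊆ B ∧ (0 : S) ∈ B ∧
      (∀ x ∈ B, ∀ y ∈ B, x + y ∈ B) ∧
      (∀ x ∈ B, ∃ f : ℕ → S, (∀ k, f k ∈ B) ∧ (∀ k, WayBelow (f k) (f (k + 1))) ∧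
        IsLUB (Set.range f) x) ∧
      (∀ x' x : S, x' ∈ B → x ∈ B → ∀ (r : ℕ) (y : Fin r → S), (∀ j, y j ∈ B) →
        WayBelow x' x → WayBelow x (∑ j, y j) →
        ∃ z : Fin r → Fin (n + 1) → S, (∀ j k, z j k ∈ B) ∧
          (∀ j k, WayBelow (z j k) (y j)) ∧
          WayBelow x' (∑ j, ∑ k, z j k) ∧ ∀ k, WayBelow (∑ j, z j k) x) := by
  classical
  choose σ hσ1 hσ2 using CuSemigroup.exists_wb_seq (S := S)
  have hWex : ∀ (x' x : S) (r : ℕ) (y : Fin r → S), ∃ z : Fin r → Fin (n + 1) → S,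
      WayBelow x' x → WayBelow x (∑ j, y j) →
      ((∀ j k, WayBelow (z j k) (y j)) ∧ WayBelow x' (∑ j, ∑ k, z j k) ∧
        ∀ k, WayBelow (∑ j, z j k) x) := by
    intro x' x r y
    by_cases h : WayBelow x' x ∧ WayBelow x (∑ j, y j)
    · obtain ⟨z, hz⟩ := hdim x' x r y h.1 h.2
      exact ⟨z, fun _ _ => hz⟩
    · exact ⟨fun _ _ => 0, fun h1 h2 => absurd ⟨h1, h2⟩ h⟩
  choose W hWs using hWex
  let wit : Set S → Set S := fun A => ⋃ r : ℕ,
    (fun p : S × S × (Fin r → S) × (Fin r × Fin (n + 1)) =>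
      W p.1 p.2.1 r p.2.2.1 p.2.2.2.1 p.2.2.2.2) ''
      (A ×ˢ A ×ˢ {y : Fin r → S | ∀ j, y j ∈ A} ×ˢ (Set.univ : Set (Fin r × Fin (n + 1))))
  have witc : ∀ A : Set S, A.Countable → (wit A).Countable := fun A hA =>
    Set.countable_iUnion fun r =>
      ((hA.prod (hA.prod ((Set.countable_pi fun _ => hA).prod Set.countable_univ)))).image _
  have witmem : ∀ (A : Set S) (x' x : S), x' ∈ A → x ∈ A → ∀ (r : ℕ) (y : Fin r → S),
      (∀ j, y j ∈ A) → ∀ j k, W x' x r y j k ∈ wit A := by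
    intro A x' x h1 h2 r y hy j k
    exact Set.mem_iUnion.2 ⟨r, ⟨(x', x, y, (j, k)), ⟨h1, h2, hy, trivial⟩, rfl⟩⟩
  let step : Set S → Set S := fun A =>
    A ∪ Set.image2 (· + ·) A A ∪ (⋃ x ∈ A, Set.range (σ x)) ∪ wit A
  let Bm : ℕ → Set S := fun m => Nat.rec (C ∪ {0}) (fun _ A => step A) m
  have hBms : ∀ m, Bm (m + 1) = step (Bm m) := fun _ => rfl
  have hstepsub : ∀ A, A ⊆ step A := fun A x hx => Or.inl (Or.inl (Or.inl hx))
  have hmono : Monotone Bm := monotone_nat_of_le_succ fun m => hstepsub (Bm m)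
  refine ⟨⋃ m, Bm m, ?_, ?_, ?_, ?_, ?_, ?_⟩
  · refine Set.countable_iUnion ?_
    intro m
    induction m with
    | zero => exact hC.union (Set.countable_singleton 0)
    | succ m ih =>
      exact ((ih.union (ih.image2 ih _)).union
        (Set.Countable.biUnion ih fun x _ => Set.countable_range _)).union (witc _ ih)
  · exact fun x hx => Set.mem_iUnion.2 ⟨0, Or.inl hx⟩
  · exact Set.mem_iUnion.2 ⟨0, Or.inr rfl⟩
  · intro x hx y hy
    obtain ⟨m1, hm1⟩ := Set.mem_iUnion.1 hx
    obtain ⟨m2, hm2⟩ := Set.mem_iUnion.1 hy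
    refine Set.mem_iUnion.2 ⟨max m1 m2 + 1, ?_⟩
    rw [hBms]
    exact Or.inl (Or.inl (Or.inr ⟨x, hmono (le_max_left m1 m2) hm1, y,
      hmono (le_max_right m1 m2) hm2, rfl⟩))
  · intro x hx
    refine ⟨σ x, ?_, hσ1 x, hσ2 x⟩
    intro k
    obtain ⟨m, hm⟩ := Set.mem_iUnion.1 hx
    refine Set.mem_iUnion.2 ⟨m + 1, ?_⟩
    rw [hBms]
    exact Or.inl (Or.inr (Set.mem_biUnion hm ⟨k, rfl⟩))
  · intro x' x hx' hx r y hy hwb1 hwb2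
    obtain ⟨m1, hm1⟩ := Set.mem_iUnion.1 hx'
    obtain ⟨m2, hm2⟩ := Set.mem_iUnion.1 hx
    have hyc : ∀ j, ∃ m, y j ∈ Bm m := fun j => Set.mem_iUnion.1 (hy j)
    choose g hg using hyc
    set M := max (max m1 m2) (Finset.univ.sup g) with hM
    have hx'M : x' ∈ Bm M := hmono ((le_max_left m1 m2).trans (le_max_left _ _)) hm1
    have hxM : x ∈ Bm M := hmono ((le_max_right m1 m2).trans (le_max_left _ _)) hm2
    have hyM : ∀ j, y j ∈ Bm M := fun j =>
      hmono ((Finset.le_sup (Finset.mem_univ j)).trans (le_max_right _ _)) (hg j)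
    refine ⟨W x' x r y, ?_, hWs x' x r y hwb1 hwb2⟩
    intro j k
    refine Set.mem_iUnion.2 ⟨M + 1, ?_⟩
    rw [hBms]
    exact Or.inr (witmem (Bm M) x' x hx'M hxM r y hyM j k)
end CuProof

theorem dimLE_iff_subCu_characterization {S : Type*} [AddCommMonoid S] [PartialOrder S]
    [CuSemigroup S] (n : ℕ) :
    (DimLE S n ↔ ∀ F : Finset S, ∃ T : AddSubmonoid S, IsSubCu T ∧
      (↑F : Set S) ⊆ (T : Set S) ∧ DimLE ↥T n) ∧
    (DimLE S n ↔ ∀ C : Set S, C.Countable → ∃ T : AddSubmonoid S, IsSubCu T ∧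
      C ⊆ (T : Set S) ∧ CountablyBased ↥T ∧ DimLE ↥T n) := by
  classical
  have L1 : DimLE S n → ∀ C : Set S, C.Countable → ∃ T : AddSubmonoid S, IsSubCu T ∧
      C ⊆ (T : Set S) ∧ CountablyBased ↥T ∧ DimLE ↥T n := by
    intro h C hC
    obtain ⟨B, h1, h2, h3, h4, h5, h6⟩ := CuProof.exists_good_B n h C hC
    exact CuProof.key_construction n B h3 h4 h5 h1 h6 C h2
  have L2 : (∀ C : Set S, C.Countable → ∃ T : AddSubmonoid S, IsSubCu T ∧
      C ⊆ (T : Set S) ∧ CountablyBased ↥T ∧ DimLE ↥T n) →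
      ∀ F : Finset S, ∃ T : AddSubmonoid S, IsSubCu T ∧
      (↑F : Set S) ⊆ (T : Set S) ∧ DimLE ↥T n := by
    intro h F
    obtain ⟨T, hT, hsub, _, hdim⟩ := h (↑F) F.countable_toSet
    exact ⟨T, hT, hsub, hdim⟩
  have L3 : (∀ F : Finset S, ∃ T : AddSubmonoid S, IsSubCu T ∧
      (↑F : Set S) ⊆ (T : Set S) ∧ DimLE ↥T n) → DimLE S n := by
    intro h x' x r y hx'x hxy
    obtain ⟨T, ⟨hTcu, hT2, hT3⟩, hsub, hdimT⟩ :=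
      h (insert x' (insert x (Finset.image y Finset.univ)))
    have hx'T : x' ∈ T := hsub (by simp)
    have hxT : x ∈ T := hsub (by simp)
    have hyT : ∀ j, y j ∈ T := fun j => hsub (by simp)
    set xT' : T := ⟨x', hx'T⟩
    set xT : T := ⟨x, hxT⟩
    set yT : Fin r → T := fun j => ⟨y j, hyT j⟩
    have h1 : WayBelow xT' xT := CuProof.wb_subtype_of_wb' T hT2 _ _ hx'x
    have h2 : WayBelow xT (∑ j, yT j) := by
      refine CuProof.wb_subtype_of_wb' T hT2 _ _ ?_
      rw [CuProof.coe_sum T yT]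
      exact hxy
    obtain ⟨z, hz1, hz2, hz3⟩ := hdimT xT' xT r yT h1 h2
    refine ⟨fun j k => ((z j k : T) : S), ?_, ?_, ?_⟩
    · intro j k
      exact hT3 _ _ (hz1 j k)
    · have := hT3 _ _ hz2
      have hco : ((∑ j, ∑ k, z j k : T) : S) = ∑ j, ∑ k, ((z j k : T) : S) := by
        rw [CuProof.coe_sum]
        exact Finset.sum_congr rfl fun j _ => CuProof.coe_sum _ _
      rwa [hco] at this
    · intro k
      have := hT3 _ _ (hz3 k)
      rwa [CuProof.coe_sum] at this
  exact ⟨⟨fun h => L2 (L1 h), L3⟩, ⟨L1, fun h => L3 (L2 h)⟩⟩
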